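/- For every integrable function f on the circle T = [-π, π), the Riesz logarithmic means R_n(f) = (1/l_n) Σ_{k=0}^n S_k(f)/(k+1), where l_n = Σ_{k=0}^n 1/(k+1) and S_k(f) is the k-th partial sum of the Fourier series of f, satisfy ‖R_n(f)‖_{L¹(T)} ≤ C‖f‖_{L¹(T)} with an absolute constant C independent of n and f. -/

import Mathlib

noncomputable section
open MeasureTheory Real Filter Set

/-- l_n = Σ_{k=0}^n 1/(k+1). -/
def logSum (n : ℕ) : ℝ := ∑ k ∈ Finset.range (n + 1), (1 : ℝ) / (k + 1)

/-- Fourier coefficient of f on T = [-π, π). -/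
def fourierCoef (f : ℝ → ℂ) (k : ℤ) : ℂ :=
  (1 / (2 * Real.pi)) *
    ∫ x in Set.Icc (-Real.pi) Real.pi, f x * Complex.exp (-Complex.I * (k : ℂ) * (x : ℂ))

/-- k-th partial sum of the Fourier series of f. -/
def partialSum (f : ℝ → ℂ) (k : ℕ) (x : ℝ) : ℂ :=
  ∑ j ∈ Finset.Icc (-(k : ℤ)) (k : ℤ),
    fourierCoef f j * Complex.exp (Complex.I * (j : ℂ) * (x : ℂ))

/-- Riesz logarithmic mean R_n(f). -/
def rieszMean (f : ℝ → ℂ) (n : ℕ) (x : ℝ) : ℂ :=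
  (1 / (logSum n : ℂ)) * ∑ k ∈ Finset.range (n + 1), partialSum f k x / ((k : ℂ) + 1)

namespace RieszAux
def E (j : ℤ) (u : ℝ) : ℂ := Complex.exp (Complex.I * j * u)
def D (k : ℕ) (u : ℝ) : ℂ := ∑ j ∈ Finset.Icc (-(k:ℤ)) (k:ℤ), E j u
def S (k : ℕ) (u : ℝ) : ℂ := ∑ j ∈ Finset.range (k+1), E (j:ℤ) u
def A (k : ℕ) (u : ℝ) : ℂ := ∑ j ∈ Finset.range (k+1), D j u
def G (n : ℕ) (u : ℝ) : ℂ := ∑ k ∈ Finset.range (n+1), D k u / ((k:ℂ)+1)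

lemma E_add (a b : ℤ) (u : ℝ) : E a u * E b u = E (a+b) u := by
  simp only [E, ← Complex.exp_add]; congr 1; push_cast; ring
lemma E_zero (u : ℝ) : E 0 u = 1 := by simp [E]
lemma conj_E (j : ℤ) (u : ℝ) : (starRingEnd ℂ) (E j u) = E (-j) u := by
  rw [E, ← Complex.exp_conj]; congr 1; simp [Complex.ext_iff]

lemma norm_E (j : ℤ) (u : ℝ) : ‖E j u‖ = 1 := by
  simp [E, Complex.norm_exp, Complex.mul_re]

lemma D_succ (k : ℕ) (u : ℝ) :
    D (k+1) u = D k u + E (k+1) u + E (-(k+1)) u := by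
  have hset : Finset.Icc (-((k:ℤ)+1)) ((k:ℤ)+1) =
      insert (-((k:ℤ)+1)) (insert ((k:ℤ)+1) (Finset.Icc (-(k:ℤ)) (k:ℤ))) := by
    ext m; simp [Finset.mem_Icc]; omega
  have h1 : ((k:ℤ)+1) ∉ Finset.Icc (-(k:ℤ)) (k:ℤ) := by simp [Finset.mem_Icc]
  have h2 : (-((k:ℤ)+1)) ∉ insert ((k:ℤ)+1) (Finset.Icc (-(k:ℤ)) (k:ℤ)) := by
    simp [Finset.mem_Icc]; omega
  simp only [D]
  push_cast
  rw [hset, Finset.sum_insert h2, Finset.sum_insert h1]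
  ring

lemma D_eq (m : ℕ) (u : ℝ) :
    D m u = (∑ j ∈ Finset.range m, E ((j:ℤ) - m) u)
      + (∑ j ∈ Finset.range m, E ((m:ℤ) - j) u) + 1 := by
  induction m with
  | zero => simp [D, E_zero]
  | succ m ih =>
    rw [D_succ, ih]
    simp only [Finset.sum_range_succ']
    have e1 : ∑ j ∈ Finset.range m, E ((((j+1):ℕ):ℤ) - (((m+1):ℕ):ℤ)) u
        = ∑ j ∈ Finset.range m, E ((j:ℤ) - m) u :=
      Finset.sum_congr rfl (fun i _ => by congr 1; push_cast; ring)
    have e2 : ∑ j ∈ Finset.range m, E ((((m+1):ℕ):ℤ) - (((j+1):ℕ):ℤ)) u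
        = ∑ j ∈ Finset.range m, E ((m:ℤ) - j) u :=
      Finset.sum_congr rfl (fun i _ => by congr 1; push_cast; ring)
    have e3 : E ((((0:ℕ)):ℤ) - (((m+1):ℕ):ℤ)) u = E (-((m:ℤ)+1)) u := by
      congr 1 <;> push_cast <;> ring
    have e4 : E ((((m+1):ℕ):ℤ) - (((0:ℕ)):ℤ)) u = E ((m:ℤ)+1) u := by
      congr 1 <;> push_cast <;> ring
    rw [e1, e2, e3, e4]
    push_cast
    ring

lemma A_eq (k : ℕ) (u : ℝ) : A k u = S k u * (starRingEnd ℂ) (S k u) := by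
  induction k with
  | zero => simp [A, S, D, E_zero]
  | succ k ih =>
    have hA : A (k+1) u = A k u + D (k+1) u := Finset.sum_range_succ _ _
    have hS : S (k+1) u = S k u + E ((k:ℤ)+1) u := by
      have := Finset.sum_range_succ (fun j : ℕ => E (j:ℤ) u) (k+1)
      simpa [S] using this
    have hcs : S k u * E (-((k:ℤ)+1)) u
        = ∑ j ∈ Finset.range (k+1), E ((j:ℤ) - ((k:ℤ)+1)) u := by
      rw [S, Finset.sum_mul]
      refine Finset.sum_congr rfl (fun j _ => ?_)
      rw [E_add]
      congr 1
    have hconjS : (starRingEnd ℂ) (S k u) = ∑ j ∈ Finset.range (k+1), E (-(j:ℤ)) u := by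
      rw [S, map_sum]
      exact Finset.sum_congr rfl (fun j _ => conj_E _ _)
    have hes : E ((k:ℤ)+1) u * (starRingEnd ℂ) (S k u)
        = ∑ j ∈ Finset.range (k+1), E (((k:ℤ)+1) - (j:ℤ)) u := by
      rw [hconjS, Finset.mul_sum]
      refine Finset.sum_congr rfl (fun j _ => ?_)
      rw [E_add]
      congr 1
    have hz : ((k:ℤ)+1) + (-((k:ℤ)+1)) = 0 := by ring
    have hee : E ((k:ℤ)+1) u * E (-((k:ℤ)+1)) u = 1 := by
      rw [E_add, hz, E_zero]
    have hD : D (k+1) u = (∑ j ∈ Finset.range (k+1), E ((j:ℤ) - ((k:ℤ)+1)) u)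
        + (∑ j ∈ Finset.range (k+1), E (((k:ℤ)+1) - (j:ℤ)) u) + 1 := by
      have h := D_eq (k+1) u
      push_cast at h
      exact h
    have expand : (S k u + E ((k:ℤ)+1) u) *
        ((starRingEnd ℂ) (S k u) + E (-((k:ℤ)+1)) u)
        = S k u * (starRingEnd ℂ) (S k u) + S k u * E (-((k:ℤ)+1)) u
          + E ((k:ℤ)+1) u * (starRingEnd ℂ) (S k u)
          + E ((k:ℤ)+1) u * E (-((k:ℤ)+1)) u := by ring
    rw [hA, hS, ih, map_add, conj_E, expand, hcs, hes, hee, hD]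
    ring

lemma G_decomp (n : ℕ) (u : ℝ) :
    G n u = A n u / ((n:ℂ)+1)
      + ∑ k ∈ Finset.range n, A k u / (((k:ℂ)+1) * ((k:ℂ)+2)) := by
  induction n with
  | zero => simp [G, A]
  | succ n ih =>
    have hG : G (n+1) u = G n u + D (n+1) u / (((n+1:ℕ):ℂ)+1) := by
      simp only [G, Finset.sum_range_succ]
    have hA : A (n+1) u = A n u + D (n+1) u := Finset.sum_range_succ _ _
    rw [hG, ih, Finset.sum_range_succ, hA]
    have h1 : ((n:ℂ)+1) ≠ 0 := Nat.cast_add_one_ne_zero n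
    have h2 : ((n:ℂ)+2) ≠ 0 := by
      have h : (((n+1:ℕ)):ℂ)+1 ≠ 0 := Nat.cast_add_one_ne_zero (n+1)
      intro hc; apply h; push_cast; push_cast at hc; linear_combination hc
    push_cast
    have h2' : ((n:ℂ)+1+1) ≠ 0 := by
      intro hc; apply h2; linear_combination hc
    field_simp
    ring

def gr (n : ℕ) (u : ℝ) : ℝ :=
  Complex.normSq (S n u)/((n:ℝ)+1)
    + ∑ k ∈ Finset.range n, Complex.normSq (S k u) / (((k:ℝ)+1)*((k:ℝ)+2))

lemma gr_nonneg (n : ℕ) (u : ℝ) : 0 ≤ gr n u := by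
  refine add_nonneg (div_nonneg (Complex.normSq_nonneg _) (by positivity)) ?_
  refine Finset.sum_nonneg fun k _ => div_nonneg (Complex.normSq_nonneg _) (by positivity)

lemma G_eq_gr (n : ℕ) (u : ℝ) : G n u = ((gr n u : ℝ) : ℂ) := by
  rw [G_decomp, gr]
  push_cast [A_eq, Complex.mul_conj]
  ring

lemma norm_G (n : ℕ) (u : ℝ) : ‖G n u‖ = gr n u := by
  rw [G_eq_gr, Complex.norm_real, Real.norm_eq_abs, abs_of_nonneg (gr_nonneg n u)]

lemma cont_E (j : ℤ) : Continuous (E j) := by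
  unfold E; continuity

lemma cont_D (k : ℕ) : Continuous (D k) := by
  unfold D
  exact continuous_finset_sum _ fun j _ => cont_E j

lemma cont_G (n : ℕ) : Continuous (G n) := by
  unfold G
  exact continuous_finset_sum _ fun k _ => (cont_D k).div_const _

lemma periodic_E (j : ℤ) : Function.Periodic (E j) (2*π) := by
  intro u
  unfold E
  rw [show (Complex.I * j * (↑(u + 2*π)) : ℂ) = Complex.I * j * u + j * (2*π*Complex.I) by
    push_cast; ring, Complex.exp_add, Complex.exp_int_mul_two_pi_mul_I, mul_one]

lemma periodic_G (n : ℕ) : Function.Periodic (G n) (2*π) := by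
  intro u
  unfold G D
  exact Finset.sum_congr rfl fun k _ => by
    rw [Finset.sum_congr rfl fun j _ => periodic_E j u]

lemma intE_zero : (∫ x in (-π)..π, E 0 x) = 2*π := by
  simp only [E_zero, intervalIntegral.integral_const, Complex.real_smul, mul_one]
  push_cast
  ring

lemma intE_ne {j : ℤ} (hj : j ≠ 0) : (∫ x in (-π)..π, E j x) = 0 := by
  have hc : (Complex.I * j : ℂ) ≠ 0 := by
    simp [Complex.I_ne_zero, hj]
  unfold E
  rw [integral_exp_mul_complex hc]
  have hper : Complex.exp (Complex.I * j * (π:ℝ)) = Complex.exp (Complex.I * j * ((-π:ℝ):ℂ)) := by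
    rw [show (Complex.I * j * ((-π:ℝ):ℂ) : ℂ) = Complex.I * j * (π:ℝ) - j * (2*π*Complex.I) by
      push_cast; ring, Complex.exp_sub, Complex.exp_int_mul_two_pi_mul_I, div_one]
  rw [show ((-π:ℝ):ℂ) = -(π:ℂ) by push_cast; ring] at hper
  push_cast
  rw [hper, sub_self, zero_div]


lemma set_eq_int {X : Type*} [NormedAddCommGroup X] [NormedSpace ℝ X] (f : ℝ → X) :
    (∫ x in Icc (-π) π, f x) = ∫ x in (-π)..π, f x := by
  rw [intervalIntegral.integral_of_le (by linarith [pi_pos]),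
    MeasureTheory.integral_Icc_eq_integral_Ioc]

lemma intD (k : ℕ) : (∫ x in (-π)..π, D k x) = 2*π := by
  unfold D
  rw [intervalIntegral.integral_finset_sum
    (fun j _ => (cont_E j).intervalIntegrable _ _)]
  rw [Finset.sum_congr rfl (fun j _ => show (∫ x in (-π)..π, E j x)
      = if j = 0 then (2*π:ℂ) else 0 by
    split_ifs with h
    · rw [h]; exact intE_zero
    · exact intE_ne h)]
  rw [Finset.sum_ite_eq' (Finset.Icc (-(k:ℤ)) k) 0 (fun _ => (2*π:ℂ))]
  simp

lemma intG (n : ℕ) : (∫ x in (-π)..π, G n x) = 2*π*(logSum n : ℝ) := by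
  unfold G
  rw [intervalIntegral.integral_finset_sum
    (fun k _ => ((cont_D k).div_const _).intervalIntegrable _ _)]
  rw [Finset.sum_congr rfl (fun k _ => intervalIntegral.integral_div _ _)]
  rw [Finset.sum_congr rfl (fun k _ => by rw [intD k])]
  rw [logSum]
  push_cast
  rw [Finset.mul_sum]
  exact Finset.sum_congr rfl fun k _ => by ring

lemma int_gr (n : ℕ) : (∫ x in (-π)..π, gr n x) = 2*π*logSum n := by
  have h : ((∫ x in (-π)..π, gr n x : ℝ) : ℂ) = ((2*π*logSum n : ℝ) : ℂ) := by
    rw [← intervalIntegral.integral_ofReal]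
    rw [show (fun x => ((gr n x : ℝ) : ℂ)) = G n from funext fun x => (G_eq_gr n x).symm]
    rw [intG n]
    push_cast
    ring
  exact_mod_cast h

lemma periodic_gr (n : ℕ) : Function.Periodic (gr n) (2*π) := by
  intro u
  have h := periodic_G n u
  rw [G_eq_gr, G_eq_gr] at h
  exact_mod_cast h

lemma int_norm_G_shift (n : ℕ) (t : ℝ) :
    (∫ x in Icc (-π) π, ‖G n (x - t)‖) = 2*π*logSum n := by
  have h1 : (∫ x in Icc (-π) π, ‖G n (x - t)‖) = ∫ x in (-π)..π, gr n (x - t) := by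
    rw [set_eq_int]
    exact intervalIntegral.integral_congr fun x _ => norm_G n (x - t)
  rw [h1, intervalIntegral.integral_comp_sub_right (gr n) t]
  have h2 : (∫ x in (-π - t)..(π - t), gr n x) = ∫ x in (-π)..(-π + 2*π), gr n x := by
    have := (periodic_gr n).intervalIntegral_add_eq (-π - t) (-π)
    rw [show -π - t + 2*π = π - t by ring] at this
    exact this
  rw [h2, show -π + 2*π = π by ring, int_gr]


lemma E_sub (j : ℤ) (x t : ℝ) :
    E j (x - t) = E j x * Complex.exp (-Complex.I * j * t) := by
  unfold E
  rw [← Complex.exp_add]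
  congr 1
  push_cast
  ring

lemma coef_rep (f : ℝ → ℂ) (j : ℤ) (x : ℝ) :
    fourierCoef f j * E j x
      = (1 / (2 * (π:ℂ))) * ∫ t in Icc (-π) π, f t * E j (x - t) := by
  have h : (∫ t in Icc (-π) π, f t * E j (x - t))
      = (∫ t in Icc (-π) π, f t * Complex.exp (-Complex.I * j * t)) * E j x := by
    rw [← MeasureTheory.integral_mul_const]
    refine integral_congr_ae (Filter.Eventually.of_forall fun t => ?_)
    show f t * E j (x - t) = f t * Complex.exp (-Complex.I * ↑j * ↑t) * E j x
    rw [E_sub]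
    ring
  rw [h, fourierCoef]
  push_cast
  ring

lemma partial_rep (f : ℝ → ℂ) (k : ℕ) (x : ℝ) :
    partialSum f k x = ∑ j ∈ Finset.Icc (-(k:ℤ)) (k:ℤ),
      (1 / (2 * (π:ℂ))) * ∫ t in Icc (-π) π, f t * E j (x - t) := by
  unfold partialSum
  exact Finset.sum_congr rfl fun j _ => coef_rep f j x


lemma norm_D_le (k : ℕ) (u : ℝ) : ‖D k u‖ ≤ 2*k+1 := by
  unfold D
  refine le_trans (norm_sum_le _ _) ?_
  rw [Finset.sum_congr rfl fun j _ => norm_E j u]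
  rw [Finset.sum_const, nsmul_eq_mul, mul_one]
  rw [Int.card_Icc]
  push_cast
  rw [show ((k:ℤ) + 1 - -(k:ℤ)).toNat = 2*k+1 by omega]
  push_cast
  linarith

lemma norm_G_le (n : ℕ) (u : ℝ) : ‖G n u‖ ≤ 2*(n+1) := by
  unfold G
  refine le_trans (norm_sum_le _ _) ?_
  have hb : ∀ k ∈ Finset.range (n+1), ‖D k u / ((k:ℂ)+1)‖ ≤ 2 := by
    intro k _
    rw [norm_div]
    have h1 : ‖((k:ℂ)+1)‖ = (k:ℝ)+1 := by
      rw [show ((k:ℂ)+1) = (((k+1:ℕ)):ℂ) by push_cast; ring]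
      rw [Complex.norm_natCast]
      push_cast; ring
    rw [h1, div_le_iff₀ (by positivity)]
    calc ‖D k u‖ ≤ 2*k+1 := norm_D_le k u
    _ ≤ 2 * ((k:ℝ)+1) := by linarith
  refine le_trans (Finset.sum_le_sum hb) ?_
  rw [Finset.sum_const, Finset.card_range, nsmul_eq_mul]
  push_cast
  linarith

lemma logSum_pos (n : ℕ) : 0 < logSum n := by
  unfold logSum
  refine Finset.sum_pos (fun k _ => by positivity) ⟨0, Finset.mem_range.mpr (Nat.succ_pos n)⟩

lemma integrable_mul_E {f : ℝ → ℂ} (hf : IntegrableOn f (Icc (-π) π)) (j : ℤ) (x : ℝ) :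
    IntegrableOn (fun t => f t * E j (x - t)) (Icc (-π) π) := by
  have h := hf.bdd_mul
    (((cont_E j).comp (continuous_const.sub continuous_id)).aestronglyMeasurable)
    (ae_of_all _ fun t => le_of_eq (norm_E j (x - t)))
  exact h.congr (Filter.Eventually.of_forall fun t => mul_comm _ _)

lemma integrable_mul_D {f : ℝ → ℂ} (hf : IntegrableOn f (Icc (-π) π)) (k : ℕ) (x : ℝ) :
    IntegrableOn (fun t => f t * D k (x - t)) (Icc (-π) π) := by
  have h : (fun t => f t * D k (x - t))
      = fun t => ∑ j ∈ Finset.Icc (-(k:ℤ)) (k:ℤ), f t * E j (x - t) := by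
    funext t; rw [← Finset.mul_sum]; rfl
  rw [h]
  exact MeasureTheory.integrable_finset_sum _ fun j _ => integrable_mul_E hf j x

lemma integrable_mul_G {f : ℝ → ℂ} (hf : IntegrableOn f (Icc (-π) π)) (n : ℕ) (x : ℝ) :
    IntegrableOn (fun t => f t * G n (x - t)) (Icc (-π) π) := by
  have h : (fun t => f t * G n (x - t))
      = fun t => ∑ k ∈ Finset.range (n+1), (f t * D k (x - t)) / ((k:ℂ)+1) := by
    funext t
    unfold G
    rw [Finset.mul_sum]
    exact Finset.sum_congr rfl fun k _ => by ring
  rw [h]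
  exact MeasureTheory.integrable_finset_sum _ fun k _ => (integrable_mul_D hf k x).div_const _

lemma partial_rep2 {f : ℝ → ℂ} (hf : IntegrableOn f (Icc (-π) π)) (k : ℕ) (x : ℝ) :
    partialSum f k x = (1 / (2 * (π:ℂ))) * ∫ t in Icc (-π) π, f t * D k (x - t) := by
  rw [partial_rep, ← Finset.mul_sum,
    ← MeasureTheory.integral_finset_sum _ (fun j _ => integrable_mul_E hf j x)]
  congr 1
  refine integral_congr_ae (Filter.Eventually.of_forall fun t => ?_)
  show ∑ j ∈ Finset.Icc (-(k:ℤ)) (k:ℤ), f t * E j (x - t) = f t * D k (x - t)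
  rw [← Finset.mul_sum]
  rfl

lemma riesz_rep {f : ℝ → ℂ} (hf : IntegrableOn f (Icc (-π) π)) (n : ℕ) (x : ℝ) :
    rieszMean f n x = (1 / (2 * (π:ℂ) * (logSum n : ℝ))) *
      ∫ t in Icc (-π) π, f t * G n (x - t) := by
  unfold rieszMean
  rw [Finset.sum_congr rfl fun k _ => by rw [partial_rep2 hf k x]]
  have h : ∀ k : ℕ, (1 / (2 * (π:ℂ))) * (∫ t in Icc (-π) π, f t * D k (x - t)) / ((k:ℂ)+1)
      = (1 / (2 * (π:ℂ))) * ∫ t in Icc (-π) π, (f t * D k (x - t)) / ((k:ℂ)+1) := by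
    intro k
    rw [integral_div]
    ring
  rw [Finset.sum_congr rfl fun k _ => h k, ← Finset.mul_sum,
    ← MeasureTheory.integral_finset_sum _
      (fun k _ => (integrable_mul_D hf k x).div_const ((k:ℂ)+1))]
  have h2 : (∫ t in Icc (-π) π, ∑ k ∈ Finset.range (n+1), (f t * D k (x - t)) / ((k:ℂ)+1))
      = ∫ t in Icc (-π) π, f t * G n (x - t) := by
    refine integral_congr_ae (Filter.Eventually.of_forall fun t => ?_)
    show ∑ k ∈ Finset.range (n+1), (f t * D k (x - t)) / ((k:ℂ)+1) = f t * G n (x - t)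
    unfold G
    rw [Finset.mul_sum]
    exact Finset.sum_congr rfl fun k _ => by ring
  rw [h2]
  simp only [one_div, mul_inv]
  ring


theorem main :
    ∃ C > 0, ∀ f : ℝ → ℂ, IntegrableOn f (Set.Icc (-Real.pi) Real.pi) →
      ∀ n : ℕ,
        (∫ x in Set.Icc (-Real.pi) Real.pi, ‖rieszMean f n x‖) ≤
          C * ∫ x in Set.Icc (-Real.pi) Real.pi, ‖f x‖ := by
  refine ⟨1, one_pos, fun f hf n => ?_⟩
  have hl := logSum_pos n
  set c : ℝ := 2*π*logSum n with hc
  have hcpos : 0 < c := by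
    have := pi_pos
    positivity
  set μI : Measure ℝ := volume.restrict (Icc (-π) π) with hμI
  haveI : IsFiniteMeasure μI := by
    constructor
    rw [hμI, Measure.restrict_apply_univ]
    exact measure_Icc_lt_top
  set Φ : ℝ × ℝ → ℝ := fun p => ‖f p.2‖ * ‖G n (p.1 - p.2)‖ with hΦ
  have contG2 : Continuous fun p : ℝ × ℝ => ‖G n (p.1 - p.2)‖ :=
    ((cont_G n).comp (continuous_fst.sub continuous_snd)).norm
  have aΦ : AEStronglyMeasurable Φ (μI.prod μI) :=
    (hf.norm.aestronglyMeasurable.comp_snd).mul contG2.aestronglyMeasurable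
  have hΦnonneg : ∀ p, 0 ≤ Φ p := fun p => mul_nonneg (norm_nonneg _) (norm_nonneg _)
  have hsec : ∀ x : ℝ, Integrable (fun t => Φ (x, t)) μI := by
    intro x
    have h := hf.norm.bdd_mul
      (((cont_G n).comp (continuous_const.sub continuous_id)).norm.aestronglyMeasurable)
      (c := 2*(n+1)) (ae_of_all _ fun t => by
        rw [norm_norm]; exact norm_G_le n (x - t))
    exact h.congr (Filter.Eventually.of_forall fun t => mul_comm _ _)
  have hsecbound : ∀ x : ℝ, (∫ t, Φ (x, t) ∂μI) ≤ (2*(n+1)) * ∫ t, ‖f t‖ ∂μI := by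
    intro x
    rw [← integral_const_mul]
    refine integral_mono (hsec x) (hf.norm.const_mul _) fun t => ?_
    simp only [hΦ]
    have := norm_G_le n (x - t)
    have hft : (0:ℝ) ≤ ‖f t‖ := norm_nonneg _
    calc ‖f t‖ * ‖G n (x - t)‖ ≤ ‖f t‖ * (2*(n+1)) := by
          exact mul_le_mul_of_nonneg_left this hft
    _ = 2*(n+1) * ‖f t‖ := by ring
  have intΦ : Integrable Φ (μI.prod μI) := by
    refine (integrable_prod_iff aΦ).mpr ⟨Filter.Eventually.of_forall hsec, ?_⟩
    refine Integrable.mono' (g := fun _ : ℝ => (2*(n+1)) * ∫ t, ‖f t‖ ∂μI)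
      (integrable_const _) (aΦ.norm.integral_prod_right') ?_
    refine Filter.Eventually.of_forall fun x => ?_
    rw [Real.norm_eq_abs, abs_of_nonneg (integral_nonneg fun t => norm_nonneg _)]
    calc (∫ t, ‖Φ (x, t)‖ ∂μI) = ∫ t, Φ (x, t) ∂μI := by
          refine integral_congr_ae (Filter.Eventually.of_forall fun t => ?_)
          show ‖Φ (x, t)‖ = Φ (x, t)
          rw [Real.norm_eq_abs, abs_of_nonneg (hΦnonneg _)]
    _ ≤ _ := hsecbound x
  have hF_int : Integrable (fun x => ∫ t, Φ (x, t) ∂μI) μI := intΦ.integral_prod_left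
  have hpt : ∀ x : ℝ, ‖rieszMean f n x‖ ≤ (1/c) * ∫ t, Φ (x, t) ∂μI := by
    intro x
    rw [riesz_rep hf n x, norm_mul]
    have hnc : ‖(1 / (2 * (π:ℂ) * ((logSum n : ℝ):ℂ)))‖ = 1/c := by
      rw [show (2 * (π:ℂ) * ((logSum n : ℝ):ℂ)) = ((c:ℝ):ℂ) by rw [hc]; push_cast; ring]
      rw [norm_div, norm_one, Complex.norm_real, Real.norm_eq_abs,
        abs_of_pos hcpos]
    rw [hnc]
    refine mul_le_mul_of_nonneg_left ?_ (by positivity)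
    refine le_trans (norm_integral_le_integral_norm _) (le_of_eq ?_)
    refine integral_congr_ae (Filter.Eventually.of_forall fun t => ?_)
    show ‖f t * G n (x - t)‖ = Φ (x, t)
    rw [norm_mul]
  have step1 : (∫ x in Icc (-π) π, ‖rieszMean f n x‖)
      ≤ ∫ x, (1/c) * ∫ t, Φ (x, t) ∂μI ∂μI := by
    refine integral_mono_of_nonneg (Filter.Eventually.of_forall fun x => norm_nonneg _)
      (hF_int.const_mul _) (Filter.Eventually.of_forall fun x => hpt x)
  have step2 : (∫ x, (1/c) * ∫ t, Φ (x, t) ∂μI ∂μI)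
      = (1/c) * ∫ t, ∫ x, Φ (x, t) ∂μI ∂μI := by
    rw [integral_const_mul]
    congr 1
    exact integral_integral_swap intΦ
  have step3 : ∀ t : ℝ, (∫ x, Φ (x, t) ∂μI) = ‖f t‖ * c := by
    intro t
    simp only [hΦ]
    rw [integral_const_mul, hμI, int_norm_G_shift n t, hc]
  have step4 : (1/c) * (∫ t, ∫ x, Φ (x, t) ∂μI ∂μI)
      = ∫ t, ‖f t‖ ∂μI := by
    rw [integral_congr_ae (Filter.Eventually.of_forall step3)]
    rw [show (fun t => ‖f t‖ * c) = fun t => c * ‖f t‖ from funext fun t => mul_comm _ _]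
    rw [integral_const_mul, ← mul_assoc, one_div, inv_mul_cancel₀ (ne_of_gt hcpos), one_mul]
  calc (∫ x in Icc (-π) π, ‖rieszMean f n x‖) ≤ _ := step1
  _ = _ := step2
  _ = ∫ t, ‖f t‖ ∂μI := step4
  _ = 1 * ∫ x in Icc (-π) π, ‖f x‖ := by rw [one_mul, hμI]
end RieszAux

theorem riesz_mean_L1_uniformly_bounded :
    ∃ C > 0, ∀ f : ℝ → ℂ, IntegrableOn f (Set.Icc (-Real.pi) Real.pi) →
      ∀ n : ℕ,
        (∫ x in Set.Icc (-Real.pi) Real.pi, ‖rieszMean f n x‖) ≤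
          C * ∫ x in Set.Icc (-Real.pi) Real.pi, ‖f x‖ := by
  exact RieszAux.main
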